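/- For positive integer b and nonnegative integers m, n with 2m + n ≥ 1, there exists a perfect (b,b)-coloring of the Doob graph D(m,n) if and only if b is even and 2b = 4i for some i ∈ {1,...,2m+n}. -/

import Mathlib

open SimpleGraph

/-- The Shrikhande graph: Cayley graph on `ZMod 4 × ZMod 4` with connection set
`{(0,1),(0,3),(1,0),(3,0),(1,1),(3,3)}`. -/
def shrikhande : SimpleGraph (ZMod 4 × ZMod 4) :=
  SimpleGraph.fromRel (fun x y =>
    x - y ∈ ({(0, 1), (0, 3), (1, 0), (3, 0), (1, 1), (3, 3)} : Set (ZMod 4 × ZMod 4)))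

/-- Vertices of the Doob graph `D(m,n)`. -/
abbrev DoobVertex (m n : ℕ) := (Fin m → ZMod 4 × ZMod 4) × (Fin n → ZMod 4)

/-- The Doob graph `D(m,n)`: the Cartesian (box) product of `m` copies of the
Shrikhande graph and `n` copies of the complete graph `K₄`. Two vertices are
adjacent iff they differ in exactly one coordinate and are adjacent in the
corresponding factor. -/
def doobGraph (m n : ℕ) : SimpleGraph (DoobVertex m n) :=
  SimpleGraph.fromRel (fun x y =>
    (∃ i, shrikhande.Adj (x.1 i) (y.1 i) ∧ (∀ j, j ≠ i → x.1 j = y.1 j) ∧ x.2 = y.2) ∨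
    (∃ i, x.2 i ≠ y.2 i ∧ (∀ j, j ≠ i → x.2 j = y.2 j) ∧ x.1 = y.1))

/-- `f` is a perfect coloring of `G` with quotient matrix `S`: `f` is surjective and
every vertex of color `i` has exactly `S i j` neighbors of color `j`. -/
def IsPerfectColoring {V C : Type*} (G : SimpleGraph V) (f : V → C)
    (S : Matrix C C ℕ) : Prop :=
  Function.Surjective f ∧
    ∀ x c, {y | G.Adj x y ∧ f y = c}.ncard = S (f x) c

/-- A perfect `(b,c)`-coloring: a perfect 2-coloring in which every vertex of
color `0` has exactly `b` neighbors of color `1`, every vertex of color `1` has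
exactly `c` neighbors of color `0` (and the numbers of same-color neighbors are
also constant on each color class). -/
def IsPerfectBCColoring {V : Type*} (G : SimpleGraph V) (f : V → Fin 2)
    (b c : ℕ) : Prop :=
  ∃ a d : ℕ,
    IsPerfectColoring G f (Matrix.of ![![a, b], ![c, d]])

open Finset




abbrev Z4 := ZMod 4
def SSh : Finset (Z4 × Z4) := {(0,1),(0,3),(1,0),(3,0),(1,1),(3,3)}
def SK : Finset Z4 := {1,2,3}

lemma shrikhande_adj : ∀ u v : Z4 × Z4, shrikhande.Adj u v ↔ u - v ∈ SSh := by
  simp only [shrikhande, SimpleGraph.fromRel_adj, Set.mem_insert_iff,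
    Set.mem_singleton_iff, SSh, Finset.mem_insert, Finset.mem_singleton]
  decide

lemma SSh_ne_zero : ∀ u ∈ SSh, u ≠ 0 := by decide
lemma SSh_neg : ∀ u ∈ SSh, -u ∈ SSh := by decide
lemma SK_iff : ∀ t : Z4, t ∈ SK ↔ t ≠ 0 := by decide

variable {m n : ℕ}

def ι1 (i : Fin m) (u : Z4 × Z4) : DoobVertex m n := (Pi.single i u, 0)
def ι2 (i : Fin n) (t : Z4) : DoobVertex m n := (0, Pi.single i t)

def StepSet (m n : ℕ) : Finset (DoobVertex m n) :=
  ((Finset.univ ×ˢ SSh).image fun p => ι1 p.1 p.2) ∪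
  ((Finset.univ ×ˢ SK).image fun p => ι2 p.1 p.2)

lemma mem_stepSet {v : DoobVertex m n} :
    v ∈ StepSet m n ↔ (∃ i u, u ∈ SSh ∧ v = ι1 i u) ∨ (∃ i t, t ∈ SK ∧ v = ι2 i t) := by
  simp only [StepSet, Finset.mem_union, Finset.mem_image, Finset.mem_product, Finset.mem_univ,
    true_and]
  constructor
  · rintro (⟨⟨i, u⟩, hu, rfl⟩ | ⟨⟨i, t⟩, ht, rfl⟩)
    · exact Or.inl ⟨i, u, hu, rfl⟩
    · exact Or.inr ⟨i, t, ht, rfl⟩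
  · rintro (⟨i, u, hu, rfl⟩ | ⟨i, t, ht, rfl⟩)
    · exact Or.inl ⟨(i, u), hu, rfl⟩
    · exact Or.inr ⟨(i, t), ht, rfl⟩

lemma iota1_ne_zero {i : Fin m} {u : Z4 × Z4} (hu : u ≠ 0) : (ι1 i u : DoobVertex m n) ≠ 0 := by
  intro h
  apply hu
  have := congrArg (fun v : DoobVertex m n => v.1 i) h
  simpa [ι1] using this

lemma iota2_ne_zero {i : Fin n} {t : Z4} (ht : t ≠ 0) : (ι2 i t : DoobVertex m n) ≠ 0 := by
  intro h
  apply ht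
  have := congrArg (fun v : DoobVertex m n => v.2 i) h
  simpa [ι2] using this

lemma stepSet_ne_zero {v : DoobVertex m n} (hv : v ∈ StepSet m n) : v ≠ 0 := by
  rcases mem_stepSet.1 hv with ⟨i, u, hu, rfl⟩ | ⟨i, t, ht, rfl⟩
  · exact iota1_ne_zero (SSh_ne_zero u hu)
  · exact iota2_ne_zero ((SK_iff t).1 ht)

lemma neg_iota1 (i : Fin m) (u : Z4 × Z4) : -(ι1 i u : DoobVertex m n) = ι1 i (-u) := by
  refine Prod.ext ?_ ?_
  · funext j
    rcases eq_or_ne j i with rfl | hj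
    · simp [ι1]
    · simp [ι1, Pi.single_eq_of_ne hj]
  · simp [ι1]

lemma neg_iota2 (i : Fin n) (t : Z4) : -(ι2 i t : DoobVertex m n) = ι2 i (-t) := by
  refine Prod.ext ?_ ?_
  · simp [ι2]
  · funext j
    rcases eq_or_ne j i with rfl | hj
    · simp [ι2]
    · simp [ι2, Pi.single_eq_of_ne hj]

lemma stepSet_neg {v : DoobVertex m n} (hv : v ∈ StepSet m n) : -v ∈ StepSet m n := by
  rcases mem_stepSet.1 hv with ⟨i, u, hu, rfl⟩ | ⟨i, t, ht, rfl⟩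
  · exact mem_stepSet.2 (Or.inl ⟨i, -u, SSh_neg u hu, (neg_iota1 i u)⟩)
  · refine mem_stepSet.2 (Or.inr ⟨i, -t, ?_, (neg_iota2 i t)⟩)
    rw [SK_iff] at ht ⊢
    simpa using ht

lemma sub_eq_iota1 {x y : DoobVertex m n} {i : Fin m} {u : Z4 × Z4} :
    x - y = ι1 i u ↔ (x.1 i - y.1 i = u ∧ (∀ j, j ≠ i → x.1 j = y.1 j) ∧ x.2 = y.2) := by
  constructor
  · intro h
    have h1 := congrArg Prod.fst h
    have h2 := congrArg Prod.snd h
    simp only [Prod.fst_sub, Prod.snd_sub, ι1] at h1 h2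
    refine ⟨?_, ?_, ?_⟩
    · have := congrFun h1 i; simpa using this
    · intro j hj
      have := congrFun h1 j
      rw [Pi.sub_apply, Pi.single_eq_of_ne hj] at this
      exact sub_eq_zero.1 this
    · exact sub_eq_zero.1 h2
  · rintro ⟨h1, h2, h3⟩
    refine Prod.ext ?_ ?_
    · funext j
      rcases eq_or_ne j i with rfl | hj
      · simpa [ι1] using h1
      · simp only [Prod.fst_sub, Pi.sub_apply, ι1, Pi.single_eq_of_ne hj]
        exact sub_eq_zero.2 (h2 j hj)
    · simpa [ι1, Prod.snd_sub, sub_eq_zero] using h3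

lemma sub_eq_iota2 {x y : DoobVertex m n} {i : Fin n} {t : Z4} :
    x - y = ι2 i t ↔ (x.2 i - y.2 i = t ∧ (∀ j, j ≠ i → x.2 j = y.2 j) ∧ x.1 = y.1) := by
  constructor
  · intro h
    have h1 := congrArg Prod.fst h
    have h2 := congrArg Prod.snd h
    simp only [Prod.fst_sub, Prod.snd_sub, ι2] at h1 h2
    refine ⟨?_, ?_, ?_⟩
    · have := congrFun h2 i; simpa using this
    · intro j hj
      have := congrFun h2 j
      rw [Pi.sub_apply, Pi.single_eq_of_ne hj] at this
      exact sub_eq_zero.1 this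
    · exact sub_eq_zero.1 h1
  · rintro ⟨h1, h2, h3⟩
    refine Prod.ext ?_ ?_
    · simpa [ι2, Prod.fst_sub, sub_eq_zero] using h3
    · funext j
      rcases eq_or_ne j i with rfl | hj
      · simpa [ι2] using h1
      · simp only [Prod.snd_sub, Pi.sub_apply, ι2, Pi.single_eq_of_ne hj]
        exact sub_eq_zero.2 (h2 j hj)

lemma doobP_iff {x y : DoobVertex m n} :
    ((∃ i, shrikhande.Adj (x.1 i) (y.1 i) ∧ (∀ j, j ≠ i → x.1 j = y.1 j) ∧ x.2 = y.2) ∨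
     (∃ i, x.2 i ≠ y.2 i ∧ (∀ j, j ≠ i → x.2 j = y.2 j) ∧ x.1 = y.1)) ↔
    x - y ∈ StepSet m n := by
  constructor
  · rintro (⟨i, hadj, hoth, h2⟩ | ⟨i, hne, hoth, h1⟩)
    · refine mem_stepSet.2 (Or.inl ⟨i, x.1 i - y.1 i, (shrikhande_adj _ _).1 hadj, ?_⟩)
      exact sub_eq_iota1.2 ⟨rfl, hoth, h2⟩
    · refine mem_stepSet.2 (Or.inr ⟨i, x.2 i - y.2 i, (SK_iff _).2 (sub_ne_zero.2 hne), ?_⟩)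
      exact sub_eq_iota2.2 ⟨rfl, hoth, h1⟩
  · intro h
    rcases mem_stepSet.1 h with ⟨i, u, hu, heq⟩ | ⟨i, t, ht, heq⟩
    · obtain ⟨h1, h2, h3⟩ := sub_eq_iota1.1 heq
      exact Or.inl ⟨i, (shrikhande_adj _ _).2 (h1 ▸ hu), h2, h3⟩
    · obtain ⟨h1, h2, h3⟩ := sub_eq_iota2.1 heq
      refine Or.inr ⟨i, ?_, h2, h3⟩
      rw [← sub_ne_zero, h1]
      exact (SK_iff t).1 ht

lemma doob_adj {x y : DoobVertex m n} :
    (doobGraph m n).Adj x y ↔ x - y ∈ StepSet m n := by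
  rw [doobGraph, SimpleGraph.fromRel_adj]
  constructor
  · rintro ⟨hne, h | h⟩
    · exact doobP_iff.1 h
    · have : y - x ∈ StepSet m n := doobP_iff.1 h
      simpa using stepSet_neg this
  · intro h
    have hne : x ≠ y := by
      intro heq; exact stepSet_ne_zero h (by simp [heq])
    exact ⟨hne, Or.inl (doobP_iff.2 h)⟩

lemma iota1_injOn {p q : Fin m × (Z4 × Z4)} (hp : p ∈ Finset.univ ×ˢ SSh)
    (hq : q ∈ Finset.univ ×ˢ SSh) (h : (ι1 p.1 p.2 : DoobVertex m n) = ι1 q.1 q.2) : p = q := by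
  obtain ⟨i, u⟩ := p; obtain ⟨j, v⟩ := q
  simp only [Finset.mem_product] at hp hq
  have h1 := congrArg Prod.fst h
  simp only [ι1] at h1
  rcases eq_or_ne i j with rfl | hij
  · have := congrFun h1 i
    simp at this
    simp [this]
  · have := congrFun h1 i
    rw [Pi.single_eq_same, Pi.single_eq_of_ne hij] at this
    exact absurd this (SSh_ne_zero _ hp.2)

lemma iota2_injOn {p q : Fin n × Z4} (hp : p ∈ Finset.univ ×ˢ SK)
    (hq : q ∈ Finset.univ ×ˢ SK) (h : (ι2 p.1 p.2 : DoobVertex m n) = ι2 q.1 q.2) : p = q := by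
  obtain ⟨i, u⟩ := p; obtain ⟨j, v⟩ := q
  simp only [Finset.mem_product] at hp hq
  have h1 := congrArg Prod.snd h
  simp only [ι2] at h1
  rcases eq_or_ne i j with rfl | hij
  · have := congrFun h1 i
    simp at this
    simp [this]
  · have := congrFun h1 i
    rw [Pi.single_eq_same, Pi.single_eq_of_ne hij] at this
    exact absurd this ((SK_iff _).1 hp.2)

lemma stepSet_disj :
    Disjoint ((Finset.univ ×ˢ SSh).image fun p => (ι1 p.1 p.2 : DoobVertex m n))
      ((Finset.univ ×ˢ SK).image fun p => (ι2 p.1 p.2 : DoobVertex m n)) := by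
  rw [Finset.disjoint_left]
  rintro v hv1 hv2
  simp only [Finset.mem_image, Finset.mem_product, Finset.mem_univ, true_and] at hv1 hv2
  obtain ⟨⟨i, u⟩, hu, rfl⟩ := hv1
  obtain ⟨⟨j, t⟩, ht, heq⟩ := hv2
  have h1 := congrArg Prod.fst heq
  simp only [ι1, ι2] at h1
  have := congrFun h1 i
  rw [Pi.single_eq_same] at this
  exact SSh_ne_zero _ hu this.symm

lemma sum_stepSet {M : Type*} [AddCommMonoid M] (g : DoobVertex m n → M) :
    ∑ s ∈ StepSet m n, g s =
      (∑ i, ∑ u ∈ SSh, g (ι1 i u)) + ∑ i, ∑ t ∈ SK, g (ι2 i t) := by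
  rw [StepSet, Finset.sum_union stepSet_disj,
    Finset.sum_image (fun p hp q hq h => iota1_injOn hp hq h),
    Finset.sum_image (fun p hp q hq h => iota2_injOn hp hq h),
    Finset.sum_product, Finset.sum_product]

lemma ncard_nbr (f : DoobVertex m n → Fin 2) (x : DoobVertex m n) (c : Fin 2) :
    {y | (doobGraph m n).Adj x y ∧ f y = c}.ncard =
      ((StepSet m n).filter fun s => f (x - s) = c).card := by
  have hset : {y | (doobGraph m n).Adj x y ∧ f y = c} =
      ↑(((StepSet m n).filter fun s => f (x - s) = c).image fun s => x - s) := by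
    ext y
    simp only [Set.mem_setOf_eq, Finset.coe_image, Set.mem_image, Finset.mem_coe,
      Finset.mem_filter]
    constructor
    · rintro ⟨hadj, hc⟩
      exact ⟨x - y, ⟨doob_adj.1 hadj, by rwa [sub_sub_cancel]⟩, sub_sub_cancel x y⟩
    · rintro ⟨s, ⟨hs, hc⟩, rfl⟩
      exact ⟨doob_adj.2 (by rwa [sub_sub_cancel]), hc⟩
  rw [hset, Set.ncard_coe_finset,
    Finset.card_image_of_injective _ (fun a b h => by simpa using sub_right_injective h)]

noncomputable def ch : Z4 → ℂ := fun t =>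
  if t = 0 then 1 else if t = 1 then Complex.I else if t = 2 then -1 else -Complex.I

lemma ch_zero : ch 0 = 1 := by simp [ch]

lemma z4cases : ∀ t : Z4, t = 0 ∨ t = 1 ∨ t = 2 ∨ t = 3 := by decide

lemma ch_add (s t : Z4) : ch (s + t) = ch s * ch t := by
  rcases z4cases s with rfl|rfl|rfl|rfl <;> rcases z4cases t with rfl|rfl|rfl|rfl <;>
    simp +decide [ch] <;> norm_num [Complex.I_sq] <;> ring_nf <;> norm_num [Complex.I_sq]

lemma sum_z4 (g : Z4 → ℂ) : (∑ t : Z4, g t) = g 0 + g 1 + g 2 + g 3 := by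
  rw [show (Finset.univ : Finset Z4) = {0,1,2,3} by decide,
    Finset.sum_insert (by decide), Finset.sum_insert (by decide),
    Finset.sum_insert (by decide), Finset.sum_singleton]
  ring

lemma sum_ch (w : Z4) : (∑ t : Z4, ch (t * w)) = if w = 0 then 4 else 0 := by
  rcases z4cases w with rfl|rfl|rfl|rfl <;>
    rw [sum_z4] <;> simp +decide [ch] <;> ring_nf <;> norm_num [Complex.I_sq]


def dot (u v : Z4 × Z4) : Z4 := u.1 * v.1 + u.2 * v.2

lemma sum_SSh (g : Z4 × Z4 → ℂ) :
    (∑ u ∈ SSh, g u) = g (0,1) + g (0,3) + g (1,0) + g (3,0) + g (1,1) + g (3,3) := by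
  rw [SSh, Finset.sum_insert (by decide), Finset.sum_insert (by decide),
    Finset.sum_insert (by decide), Finset.sum_insert (by decide),
    Finset.sum_insert (by decide), Finset.sum_singleton]
  ring

lemma sum_SK (g : Z4 → ℂ) : (∑ u ∈ SK, g u) = g 1 + g 2 + g 3 := by
  rw [SK, Finset.sum_insert (by decide), Finset.sum_insert (by decide), Finset.sum_singleton]
  ring

lemma z4sq : ∀ t : Z4 × Z4, ∃ a b : Z4, t = (a, b) := fun t => ⟨t.1, t.2, rfl⟩

def aSh (κ : Z4 × Z4) : ℕ :=
  if κ.1 = 0 then (if κ.2 = 0 then 0 else if κ.2 = 2 then 2 else 1)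
  else if κ.1 = 1 then (if κ.2 = 1 then 2 else if κ.2 = 2 then 2 else 1)
  else if κ.1 = 2 then 2
  else (if κ.2 = 2 then 2 else if κ.2 = 3 then 2 else 1)

lemma aSh_le (κ : Z4 × Z4) : aSh κ ≤ 2 := by revert κ; decide

lemma FSh (κ : Z4 × Z4) : (∑ u ∈ SSh, (ch (dot κ u) - 1)) = -(4 * (aSh κ : ℂ)) := by
  obtain ⟨x, y, rfl⟩ := z4sq κ
  rcases z4cases x with rfl|rfl|rfl|rfl <;> rcases z4cases y with rfl|rfl|rfl|rfl <;>
    rw [sum_SSh] <;> simp +decide [ch, dot, aSh] <;> ring_nf <;> norm_num [Complex.I_sq]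

def aK (κ : Z4) : ℕ := if κ = 0 then 0 else 1

lemma aK_le (κ : Z4) : aK κ ≤ 1 := by revert κ; decide

lemma FK (κ : Z4) : (∑ u ∈ SK, (ch (κ * u) - 1)) = -(4 * (aK κ : ℂ)) := by
  rcases z4cases κ with rfl|rfl|rfl|rfl <;>
    rw [sum_SK] <;> simp +decide [ch, aK] <;> ring_nf <;> norm_num [Complex.I_sq]

lemma ch_ne_zero (t : Z4) : ch t ≠ 0 := by
  rcases z4cases t with rfl|rfl|rfl|rfl <;> simp +decide [ch] <;> exact Complex.I_ne_zero

noncomputable def psi (k x : DoobVertex m n) : ℂ :=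
  (∏ i, ch (dot (k.1 i) (x.1 i))) * ∏ i, ch (k.2 i * x.2 i)

lemma dot_add (a u v : Z4 × Z4) : dot a (u + v) = dot a u + dot a v := by
  simp only [dot, Prod.fst_add, Prod.snd_add]; ring

lemma psi_add (k x y : DoobVertex m n) : psi k (x + y) = psi k x * psi k y := by
  unfold psi
  have h1 : ∀ i, ch (dot (k.1 i) ((x + y).1 i)) =
      ch (dot (k.1 i) (x.1 i)) * ch (dot (k.1 i) (y.1 i)) := by
    intro i
    rw [show (x + y).1 i = x.1 i + y.1 i from rfl, dot_add, ch_add]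
  have h2 : ∀ i, ch (k.2 i * (x + y).2 i) = ch (k.2 i * x.2 i) * ch (k.2 i * y.2 i) := by
    intro i
    rw [show (x + y).2 i = x.2 i + y.2 i from rfl, mul_add, ch_add]
  simp only [h1, h2, Finset.prod_mul_distrib]
  ring

lemma psi_zero_right (k : DoobVertex m n) : psi k 0 = 1 := by
  unfold psi
  simp [dot, ch_zero, show ((0:DoobVertex m n).1 = fun _ => 0) from rfl,
    show ((0:DoobVertex m n).2 = fun _ => 0) from rfl]

lemma psi_iota1 (k : DoobVertex m n) (i : Fin m) (u : Z4 × Z4) :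
    psi k (ι1 i u) = ch (dot (k.1 i) u) := by
  unfold psi ι1
  rw [Finset.prod_eq_single i (fun j _ hj => by
      simp [Pi.single_eq_of_ne hj, dot, ch_zero]) (by simp)]
  simp [ch_zero, ch]

lemma psi_iota2 (k : DoobVertex m n) (i : Fin n) (t : Z4) :
    psi k (ι2 i t) = ch (k.2 i * t) := by
  unfold psi ι2
  have h1 : (∏ j, ch (dot (k.1 j) (((0 : Fin m → Z4 × Z4), (Pi.single i t : Fin n → Z4)).1 j))) = 1 := by
    simp [dot, ch_zero]
  rw [h1, one_mul, Finset.prod_eq_single i (fun j _ hj => by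
      simp [Pi.single_eq_of_ne hj, ch_zero]) (by simp)]
  simp

lemma sum_ch2 (w : Z4 × Z4) : (∑ a : Z4 × Z4, ch (dot a w)) = if w = 0 then 16 else 0 := by
  have : ∀ a : Z4 × Z4, ch (dot a w) = ch (a.1 * w.1) * ch (a.2 * w.2) := by
    intro a; rw [← ch_add]; rfl
  rw [Fintype.sum_prod_type]
  simp only [this]
  rw [← Finset.sum_mul_sum]
  simp only [sum_ch]
  rcases eq_or_ne w 0 with rfl | hw
  · norm_num
  · have : w.1 ≠ 0 ∨ w.2 ≠ 0 := by
      by_contra h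
      push_neg at h
      exact hw (Prod.ext h.1 h.2)
    rcases this with h | h
    · rw [if_neg h, zero_mul, if_neg hw]
    · rw [if_neg h, mul_zero, if_neg hw]

lemma sum_psi {z : DoobVertex m n} (hz : z ≠ 0) : (∑ k : DoobVertex m n, psi k z) = 0 := by
  unfold psi
  rw [Fintype.sum_prod_type]
  dsimp only
  rw [← Finset.sum_mul_sum,
    show (∑ x : Fin m → Z4 × Z4, ∏ i, ch (dot (x i) (z.1 i))) =
      ∏ i, ∑ a : Z4 × Z4, ch (dot a (z.1 i)) from
      (Fintype.prod_sum (fun i a => ch (dot a (z.1 i)))).symm,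
    show (∑ x : Fin n → Z4, ∏ i, ch (x i * z.2 i)) =
      ∏ i, ∑ a : Z4, ch (a * z.2 i) from
      (Fintype.prod_sum (fun i a => ch (a * z.2 i))).symm]
  have hz' : z.1 ≠ 0 ∨ z.2 ≠ 0 := by
    by_contra h
    push_neg at h
    exact hz (Prod.ext h.1 h.2)
  rcases hz' with h | h
  · obtain ⟨i, hi⟩ : ∃ i, z.1 i ≠ 0 := by
      by_contra hc; push_neg at hc; exact h (funext hc)
    have : (∏ i, ∑ a : Z4 × Z4, ch (dot a (z.1 i))) = 0 :=
      Finset.prod_eq_zero (Finset.mem_univ i) (by rw [sum_ch2, if_neg hi])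
    rw [this, zero_mul]
  · obtain ⟨i, hi⟩ : ∃ i, z.2 i ≠ 0 := by
      by_contra hc; push_neg at hc; exact h (funext hc)
    have : (∏ i, ∑ a : Z4, ch (a * z.2 i)) = 0 :=
      Finset.prod_eq_zero (Finset.mem_univ i) (by rw [sum_ch, if_neg hi])
    rw [this, mul_zero]



lemma fin2_cases : ∀ p : Fin 2, p = 0 ∨ p = 1 := by decide

lemma forward_dir {m n b : ℕ} (hb : 0 < b) (f : DoobVertex m n → Fin 2)
    (hf : IsPerfectBCColoring (doobGraph m n) f b b) :
    ∃ I : ℕ, 1 ≤ I ∧ I ≤ 2 * m + n ∧ 2 * b = 4 * I := by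
  obtain ⟨a, d, hsurj, hcount⟩ := hf
  -- the ±1 coloring function
  set χ : DoobVertex m n → ℂ := fun y => if f y = 0 then 1 else -1 with hχ
  have hχ_ne : ∀ y, χ y ≠ 0 := by
    intro y
    by_cases h : f y = 0 <;> simp [hχ, h]
  have hχ_opp : ∀ {y z : DoobVertex m n}, f y ≠ f z → χ y = -χ z := by
    intro y z h
    rcases fin2_cases (f y) with hy | hy <;> rcases fin2_cases (f z) with hz | hz <;>
      simp [hχ, hy, hz] at h ⊢
  have hχ_same : ∀ {y z : DoobVertex m n}, f y = f z → χ y = χ z := by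
    intro y z h; simp [hχ, h]
  -- number of opposite-colored neighbours is b
  have hopp : ∀ x : DoobVertex m n,
      ((StepSet m n).filter fun s => f (x - s) ≠ f x).card = b := by
    intro x
    have key := hcount x (if f x = 0 then 1 else 0)
    rw [ncard_nbr] at key
    have hpred : ∀ s, (f (x - s) = (if f x = 0 then 1 else 0)) ↔ f (x - s) ≠ f x := by
      intro s
      rcases fin2_cases (f x) with h | h <;> rcases fin2_cases (f (x - s)) with h' | h' <;>
        simp [h, h']
    rw [Finset.filter_congr (fun s _ => hpred s)] at key
    rw [key]
    rcases fin2_cases (f x) with h | h <;>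
      simp [h, Matrix.cons_val_zero, Matrix.cons_val_one]
  -- eigenvector equation
  have heig : ∀ x : DoobVertex m n,
      (∑ s ∈ StepSet m n, (χ (x - s) - χ x)) = (-2 * b) * χ x := by
    intro x
    have hsplit := Finset.sum_filter_add_sum_filter_not (StepSet m n)
      (fun s => f (x - s) = f x) (fun s => χ (x - s))
    have h1 : (∑ s ∈ (StepSet m n).filter fun s => f (x - s) = f x, χ (x - s)) =
        (((StepSet m n).filter fun s => f (x - s) = f x).card : ℂ) * χ x := by
      rw [Finset.sum_congr rfl (fun s hs => hχ_same (Finset.mem_filter.1 hs).2),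
        Finset.sum_const, nsmul_eq_mul]
    have h2 : (∑ s ∈ (StepSet m n).filter fun s => ¬(f (x - s) = f x), χ (x - s)) =
        (b : ℂ) * (-χ x) := by
      rw [Finset.sum_congr rfl (fun s hs => hχ_opp (Finset.mem_filter.1 hs).2),
        Finset.sum_const, nsmul_eq_mul, hopp x]
    have hcards : (((StepSet m n).filter fun s => f (x - s) = f x).card) + b
        = (StepSet m n).card := by
      rw [← hopp x]
      exact Finset.card_filter_add_card_filter_not _
    rw [Finset.sum_sub_distrib, Finset.sum_const, ← hsplit, h1, h2, nsmul_eq_mul]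
    have : (((StepSet m n).filter fun s => f (x - s) = f x).card : ℂ)
        = ((StepSet m n).card : ℂ) - b := by
      have := congrArg (fun t : ℕ => (t : ℂ)) hcards
      push_cast at this
      linear_combination this
    rw [this]
    ring
  -- Fourier coefficients
  set hat : DoobVertex m n → ℂ := fun k => ∑ x, χ x * psi k x with hhat
  -- eigenvalue identity for each Fourier coefficient
  have hC : ∀ k : DoobVertex m n,
      (∑ s ∈ StepSet m n, (psi k s - 1)) * hat k = (-2 * b) * hat k := by
    intro k
    have way1 : (∑ x, (∑ s ∈ StepSet m n, (χ (x - s) - χ x)) * psi k x)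
        = (-2 * b) * hat k := by
      rw [hhat, Finset.mul_sum]
      exact Finset.sum_congr rfl fun x _ => by rw [heig x]; ring
    have hshift : ∀ s, (∑ x, χ (x - s) * psi k x) = psi k s * hat k := by
      intro s
      have := Fintype.sum_equiv (Equiv.addRight s)
        (fun y => χ y * psi k (y + s)) (fun x => χ (x - s) * psi k x)
        (fun y => by simp [Equiv.coe_addRight, add_sub_cancel_right])
      rw [← this, hhat, Finset.mul_sum]
      exact Finset.sum_congr rfl fun y _ => by rw [psi_add]; ring
    have way2 : (∑ x, (∑ s ∈ StepSet m n, (χ (x - s) - χ x)) * psi k x)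
        = (∑ s ∈ StepSet m n, (psi k s - 1)) * hat k := by
      calc (∑ x, (∑ s ∈ StepSet m n, (χ (x - s) - χ x)) * psi k x)
          = ∑ x, ∑ s ∈ StepSet m n, (χ (x - s) * psi k x - χ x * psi k x) := by
            refine Finset.sum_congr rfl fun x _ => ?_
            rw [Finset.sum_mul]
            exact Finset.sum_congr rfl fun s _ => by ring
        _ = ∑ s ∈ StepSet m n, ∑ x, (χ (x - s) * psi k x - χ x * psi k x) :=
            Finset.sum_comm
        _ = ∑ s ∈ StepSet m n, (psi k s * hat k - hat k) := by
            refine Finset.sum_congr rfl fun s _ => ?_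
            rw [Finset.sum_sub_distrib, hshift s, hhat]
        _ = (∑ s ∈ StepSet m n, (psi k s - 1)) * hat k := by
            rw [Finset.sum_mul]
            exact Finset.sum_congr rfl fun s _ => by ring
    rw [← way1, way2]
  -- some Fourier coefficient is nonzero
  have hD : ∃ k, hat k ≠ 0 := by
    by_contra hall
    push_neg at hall
    have h0 : (∑ k : DoobVertex m n, hat k) = 0 := by simp [hall]
    have h1 : (∑ k : DoobVertex m n, hat k)
        = ∑ x : DoobVertex m n, χ x * ∑ k : DoobVertex m n, psi k x := by
      calc (∑ k : DoobVertex m n, hat k)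
          = ∑ k : DoobVertex m n, ∑ x : DoobVertex m n, χ x * psi k x := by
            simp only [hhat]
        _ = ∑ x : DoobVertex m n, ∑ k : DoobVertex m n, χ x * psi k x := Finset.sum_comm
        _ = ∑ x : DoobVertex m n, χ x * ∑ k : DoobVertex m n, psi k x := by
            exact Finset.sum_congr rfl fun x _ => (Finset.mul_sum _ _ _).symm
    have h2 : (∑ x : DoobVertex m n, χ x * ∑ k : DoobVertex m n, psi k x)
        = χ 0 * (Fintype.card (DoobVertex m n) : ℂ) := by
      rw [Finset.sum_eq_single (0 : DoobVertex m n)]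
      · congr 1
        simp [psi_zero_right, Finset.card_univ]
      · intro x _ hx
        rw [sum_psi hx, mul_zero]
      · intro h
        exact absurd (Finset.mem_univ _) h
    rw [h1, h2] at h0
    rcases mul_eq_zero.1 h0 with h | h
    · exact hχ_ne 0 h
    · exact absurd (Nat.cast_eq_zero.1 h) Fintype.card_ne_zero
  obtain ⟨k, hk⟩ := hD
  have heq : (∑ s ∈ StepSet m n, (psi k s - 1)) = -2 * b :=
    mul_right_cancel₀ hk (hC k)
  rw [sum_stepSet (fun s => psi k s - 1)] at heq
  simp only [psi_iota1, psi_iota2, FSh, FK] at heq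
  have cast_sum : ∀ {N : ℕ} (g : Fin N → ℕ),
      (∑ i, -(4 * (g i : ℂ))) = -(4 * ((∑ i, g i : ℕ) : ℂ)) := by
    intro N g
    calc (∑ i, -(4 * (g i : ℂ))) = ∑ i, (-4) * (g i : ℂ) := by
          exact Finset.sum_congr rfl fun i _ => by ring
      _ = (-4) * ∑ i, (g i : ℂ) := by rw [Finset.mul_sum]
      _ = -(4 * ((∑ i, g i : ℕ) : ℂ)) := by rw [Nat.cast_sum]; ring
  rw [cast_sum, cast_sum] at heq
  set I : ℕ := (∑ i, aSh (k.1 i)) + ∑ i, aK (k.2 i) with hI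
  have hIb : 2 * b = 4 * I := by
    have : ((2 * b : ℕ) : ℂ) = ((4 * I : ℕ) : ℂ) := by
      rw [hI]
      push_cast [-Nat.cast_sum]
      linear_combination heq
    exact_mod_cast this
  have hIle : I ≤ 2 * m + n := by
    have hA : (∑ i, aSh (k.1 i)) ≤ ∑ _i : Fin m, 2 :=
      Finset.sum_le_sum fun i _ => aSh_le (k.1 i)
    have hB : (∑ i, aK (k.2 i)) ≤ ∑ _i : Fin n, 1 :=
      Finset.sum_le_sum fun i _ => aK_le (k.2 i)
    simp only [Finset.sum_const, Finset.card_univ, Fintype.card_fin, smul_eq_mul] at hA hB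
    omega
  exact ⟨I, by omega, hIle, hIb⟩

lemma zmod2_cases : ∀ p : ZMod 2, p = 0 ∨ p = 1 := by decide

def GSh : ℕ → (Z4 × Z4) → ZMod 2
  | 0, _ => 0
  | 1, u => if u.1.val < 2 then 1 else 0
  | _+2, u => (u.1.val : ZMod 2)

def GK : ℕ → Z4 → ZMod 2
  | 0, _ => 0
  | _+1, t => (t.val : ZMod 2)

lemma GSh_count (w : ℕ) (hw : w ≤ 2) (v : Z4 × Z4) :
    ((SSh.filter fun s => GSh w (v - s) ≠ GSh w v).card) = 2 * w := by
  interval_cases w <;> revert v <;> decide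

lemma GK_count (w : ℕ) (hw : w ≤ 1) (v : Z4) :
    ((SK.filter fun s => GK w (v - s) ≠ GK w v).card) = 2 * w := by
  interval_cases w <;> revert v <;> decide

lemma GSh_surj (w : ℕ) (h1 : 1 ≤ w) (h2 : w ≤ 2) : ∃ u v, GSh w u ≠ GSh w v := by
  interval_cases w <;> decide

lemma GK_surj (w : ℕ) (h1 : 1 ≤ w) (h2 : w ≤ 1) : ∃ u v, GK w u ≠ GK w v := by
  interval_cases w; decide

lemma exists_weights (m n i : ℕ) (h1 : 1 ≤ i) (h2 : i ≤ 2 * m + n) :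
    ∃ (w1 : Fin m → ℕ) (w2 : Fin n → ℕ),
      (∀ j, w1 j ≤ 2) ∧ (∀ j, w2 j ≤ 1) ∧ ((∑ j, w1 j) + ∑ j, w2 j) = i := by
  set s := min i (2 * m) with hs
  set r := i - s with hr
  refine ⟨fun j => min s (2 * ((j : ℕ) + 1)) - min s (2 * (j : ℕ)),
    fun j => if (j : ℕ) < r then 1 else 0,
    fun j => by dsimp only; omega, fun j => by dsimp only; split <;> omega, ?_⟩
  have hsum1 : (∑ j : Fin m, (min s (2 * ((j : ℕ) + 1)) - min s (2 * (j : ℕ)))) = s := by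
    rw [Fin.sum_univ_eq_sum_range (fun j => min s (2 * (j + 1)) - min s (2 * j)) m]
    rw [Finset.sum_range_tsub (f := fun j => min s (2 * j))
      (fun a c hac => min_le_min le_rfl (by omega))]
    omega
  have hsum2 : (∑ j : Fin n, (if (j : ℕ) < r then 1 else 0)) = r := by
    rw [Fin.sum_univ_eq_sum_range (fun j => if j < r then 1 else 0) n]
    rw [← Finset.card_filter]
    rw [show ((Finset.range n).filter fun j => j < r) = Finset.range r from by
      ext a; simp only [Finset.mem_range, Finset.mem_filter]; omega]
    exact Finset.card_range r
  rw [hsum1, hsum2]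
  omega

lemma backward_dir {m n b : ℕ} (i : ℕ) (h1 : 1 ≤ i) (h2 : i ≤ 2 * m + n)
    (hbi : b = 2 * i) :
    ∃ f : DoobVertex m n → Fin 2, IsPerfectBCColoring (doobGraph m n) f b b := by
  obtain ⟨w1, w2, hw1, hw2, hsum⟩ := exists_weights m n i h1 h2
  set f0 : DoobVertex m n → ZMod 2 :=
    fun x => (∑ j, GSh (w1 j) (x.1 j)) + ∑ j, GK (w2 j) (x.2 j) with hf0
  set f : DoobVertex m n → Fin 2 := fun x => if f0 x = 0 then 0 else 1 with hf
  have f_ne_iff : ∀ x y, f x ≠ f y ↔ f0 x ≠ f0 y := by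
    intro x y
    rcases zmod2_cases (f0 x) with h | h <;> rcases zmod2_cases (f0 y) with h' | h' <;>
      simp [hf, h, h']
  have zc1 : ∀ A B R C : ZMod 2, (A + R + C ≠ B + R + C) ↔ A ≠ B := by decide
  have zc2 : ∀ S A B R : ZMod 2, (S + (A + R) ≠ S + (B + R)) ↔ A ≠ B := by decide
  have diff1 : ∀ (x y : DoobVertex m n) (j : Fin m),
      (∀ j', j' ≠ j → x.1 j' = y.1 j') → x.2 = y.2 →
      (f0 x ≠ f0 y ↔ GSh (w1 j) (x.1 j) ≠ GSh (w1 j) (y.1 j)) := by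
    intro x y j hoth h2'
    simp only [hf0]
    have hrest : (∑ j' ∈ Finset.univ.erase j, GSh (w1 j') (x.1 j')) =
        ∑ j' ∈ Finset.univ.erase j, GSh (w1 j') (y.1 j') :=
      Finset.sum_congr rfl fun j' hj' => by rw [hoth j' (Finset.mem_erase.1 hj').1]
    rw [← Finset.add_sum_erase _ (fun j' => GSh (w1 j') (x.1 j')) (Finset.mem_univ j),
      ← Finset.add_sum_erase _ (fun j' => GSh (w1 j') (y.1 j')) (Finset.mem_univ j),
      hrest, h2']
    exact zc1 _ _ _ _
  have diff2 : ∀ (x y : DoobVertex m n) (j : Fin n),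
      (∀ j', j' ≠ j → x.2 j' = y.2 j') → x.1 = y.1 →
      (f0 x ≠ f0 y ↔ GK (w2 j) (x.2 j) ≠ GK (w2 j) (y.2 j)) := by
    intro x y j hoth h1'
    simp only [hf0]
    have hrest : (∑ j' ∈ Finset.univ.erase j, GK (w2 j') (x.2 j')) =
        ∑ j' ∈ Finset.univ.erase j, GK (w2 j') (y.2 j') :=
      Finset.sum_congr rfl fun j' hj' => by rw [hoth j' (Finset.mem_erase.1 hj').1]
    rw [← Finset.add_sum_erase _ (fun j' => GK (w2 j') (x.2 j')) (Finset.mem_univ j),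
      ← Finset.add_sum_erase _ (fun j' => GK (w2 j') (y.2 j')) (Finset.mem_univ j),
      hrest, h1']
    exact zc2 _ _ _ _
  have sub1 : ∀ (x : DoobVertex m n) (j : Fin m) (u : Z4 × Z4),
      ((x - ι1 j u).1 j = x.1 j - u) ∧ (∀ j', j' ≠ j → (x - ι1 j u).1 j' = x.1 j') ∧
        (x - ι1 j u).2 = x.2 :=
    fun x j u => ⟨by simp [ι1], fun j' hj' => by simp [ι1, Pi.single_eq_of_ne hj'],
      by simp [ι1]⟩
  have sub2 : ∀ (x : DoobVertex m n) (j : Fin n) (t : Z4),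
      ((x - ι2 j t).2 j = x.2 j - t) ∧ (∀ j', j' ≠ j → (x - ι2 j t).2 j' = x.2 j') ∧
        (x - ι2 j t).1 = x.1 :=
    fun x j t => ⟨by simp [ι2], fun j' hj' => by simp [ι2, Pi.single_eq_of_ne hj'],
      by simp [ι2]⟩
  have opp1 : ∀ (x : DoobVertex m n) (j : Fin m) (u : Z4 × Z4),
      (f (x - ι1 j u) ≠ f x ↔ GSh (w1 j) (x.1 j - u) ≠ GSh (w1 j) (x.1 j)) := by
    intro x j u
    obtain ⟨e1, e2, e3⟩ := sub1 x j u
    rw [f_ne_iff, diff1 _ _ j e2 e3, e1]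
  have opp2 : ∀ (x : DoobVertex m n) (j : Fin n) (t : Z4),
      (f (x - ι2 j t) ≠ f x ↔ GK (w2 j) (x.2 j - t) ≠ GK (w2 j) (x.2 j)) := by
    intro x j t
    obtain ⟨e1, e2, e3⟩ := sub2 x j t
    rw [f_ne_iff, diff2 _ _ j e2 e3, e1]
  have hoppcard : ∀ x, ((StepSet m n).filter fun s => f (x - s) ≠ f x).card = b := by
    intro x
    rw [Finset.card_filter, sum_stepSet (fun s => if f (x - s) ≠ f x then 1 else 0)]
    have t1 : ∀ j : Fin m, (∑ u ∈ SSh, if f (x - ι1 j u) ≠ f x then 1 else 0)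
        = 2 * w1 j := by
      intro j
      rw [Finset.sum_congr rfl (fun u _ => if_congr (opp1 x j u) rfl rfl),
        ← Finset.card_filter, GSh_count (w1 j) (hw1 j) (x.1 j)]
    have t2 : ∀ j : Fin n, (∑ t ∈ SK, if f (x - ι2 j t) ≠ f x then 1 else 0)
        = 2 * w2 j := by
      intro j
      rw [Finset.sum_congr rfl (fun t _ => if_congr (opp2 x j t) rfl rfl),
        ← Finset.card_filter, GK_count (w2 j) (hw2 j) (x.2 j)]
    rw [Finset.sum_congr rfl (fun j _ => t1 j), Finset.sum_congr rfl (fun j _ => t2 j),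
      ← Finset.mul_sum, ← Finset.mul_sum]
    omega
  have hcard2 : ∀ x, ((StepSet m n).filter fun s => f (x - s) = f x).card
      = (StepSet m n).card - b := by
    intro x
    have hpart := Finset.card_filter_add_card_filter_not
      (s := StepSet m n) (p := fun s => f (x - s) = f x)
    have : ((StepSet m n).filter fun s => ¬(f (x - s) = f x)).card = b := hoppcard x
    omega
  have fin2_ne : ∀ p q c : Fin 2, c ≠ q → (p = c ↔ p ≠ q) := by decide
  have fin2_or : ∀ (a' b' c : Fin 2), a' ≠ b' → (c = a' ∨ c = b') := by decide
  have hex : ∃ xa xb : DoobVertex m n, f xa ≠ f xb := by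
    have hcase : (∃ j, 1 ≤ w1 j) ∨ (∃ j, 1 ≤ w2 j) := by
      by_contra hc
      push_neg at hc
      have e1 : (∑ j, w1 j) = 0 := Finset.sum_eq_zero fun j _ => by have := hc.1 j; omega
      have e2 : (∑ j, w2 j) = 0 := Finset.sum_eq_zero fun j _ => by have := hc.2 j; omega
      omega
    rcases hcase with ⟨j, hj⟩ | ⟨j, hj⟩
    · obtain ⟨u, v, huv⟩ := GSh_surj (w1 j) hj (hw1 j)
      refine ⟨ι1 j u, ι1 j v, ?_⟩
      rw [f_ne_iff, diff1 _ _ j (fun j' hj' => by simp [ι1, Pi.single_eq_of_ne hj'])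
        (by simp [ι1])]
      simpa [ι1] using huv
    · obtain ⟨u, v, huv⟩ := GK_surj (w2 j) hj (hw2 j)
      refine ⟨ι2 j u, ι2 j v, ?_⟩
      rw [f_ne_iff, diff2 _ _ j (fun j' hj' => by simp [ι2, Pi.single_eq_of_ne hj'])
        (by simp [ι2])]
      simpa [ι2] using huv
  obtain ⟨xa, xb, hab⟩ := hex
  have hsurj : Function.Surjective f := by
    intro c
    rcases fin2_or _ _ c hab with h | h
    · exact ⟨xa, h.symm⟩
    · exact ⟨xb, h.symm⟩
  refine ⟨f, (StepSet m n).card - b, (StepSet m n).card - b, hsurj, ?_⟩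
  intro x c
  rw [ncard_nbr f x c]
  rcases eq_or_ne c (f x) with rfl | hc
  · rw [hcard2 x]
    rcases fin2_cases (f x) with h | h <;> rw [h] <;> simp [Matrix.cons_val_zero,
      Matrix.cons_val_one]
  · rw [Finset.filter_congr (fun s _ => fin2_ne (f (x - s)) (f x) c hc), hoppcard x]
    rcases fin2_cases (f x) with h | h <;> rcases fin2_cases c with h' | h'
    · exact absurd (h'.trans h.symm) hc
    · rw [h, h']; simp
    · rw [h, h']; simp
    · exact absurd (h'.trans h.symm) hc


theorem stmt_17 (m n b : ℕ) (hb : 0 < b) (hmn : 1 ≤ 2 * m + n) :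
    (∃ f : DoobVertex m n → Fin 2,
      IsPerfectBCColoring (doobGraph m n) f b b) ↔
    (Even b ∧ ∃ i : ℕ, 1 ≤ i ∧ i ≤ 2 * m + n ∧ 2 * b = 4 * i) := by
  constructor
  · rintro ⟨f, hf⟩
    obtain ⟨I, hI1, hI2, hI3⟩ := forward_dir hb f hf
    exact ⟨⟨I, by omega⟩, I, hI1, hI2, hI3⟩
  · rintro ⟨-, i, h1, h2, h3⟩
    exact backward_dir i h1 h2 (by omega)
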